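/- Let Z be an abelian group, let A ⊆ Z be finite and nonempty, let K ≥ 1 be the real number with |A − A| = K|A|, let 0 ≤ ε ≤ 1, and suppose E(A) ≤ K^{−(1−ε)}. Then |{t ∈ A − A : |A[t]| ≥ |A|/(2K)}| ≥ (1/4) · K^{1−ε} · |A|. -/

import Mathlib

open Finset Pointwise
open scoped Classical

/-- The additive energy `E(A) = |A|⁻³ · |{(a₁,a₂,a₃,a₄) ∈ A⁴ : a₁ − a₂ = a₃ − a₄}|`. -/
noncomputable def energy {Z : Type*} [AddCommGroup Z] [DecidableEq Z] (A : Finset Z) : ℝ :=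
  (((A ×ˢ A ×ˢ A ×ˢ A).filter
      (fun x => x.1 - x.2.1 = x.2.2.1 - x.2.2.2)).card : ℝ) / (A.card : ℝ) ^ 3

/-- `A[t] = (A + t) ∩ A`. -/
def shiftInter {Z : Type*} [AddCommGroup Z] [DecidableEq Z] (A : Finset Z) (t : Z) : Finset Z :=
  (A.image (fun a => a + t)) ∩ A

noncomputable def rfib {Z : Type*} [AddCommGroup Z] [DecidableEq Z] (A : Finset Z) (t : Z) : ℕ :=
  ((A ×ˢ A).filter (fun p => p.1 - p.2 = t)).card

lemma shiftInter_card {Z : Type*} [AddCommGroup Z] [DecidableEq Z] (A : Finset Z) (t : Z) :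
    (shiftInter A t).card = rfib A t := by
  apply Finset.card_bij' (fun x _ => (x, x - t)) (fun p _ => p.1)
  · intro x hx
    simp only [shiftInter, Finset.mem_inter, Finset.mem_image] at hx
    obtain ⟨⟨a, ha, rfl⟩, hx2⟩ := hx
    simp [rfib, Finset.mem_filter, hx2, ha]
  · intro p hp
    simp only [rfib, Finset.mem_filter, Finset.mem_product] at hp
    obtain ⟨⟨h1, h2⟩, h3⟩ := hp
    simp only [shiftInter, Finset.mem_inter, Finset.mem_image]
    exact ⟨⟨p.2, h2, by rw [← h3]; abel⟩, h1⟩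
  · intro x _; rfl
  · intro p hp
    simp only [rfib, Finset.mem_filter] at hp
    ext <;> simp [← hp.2]

lemma sum_rfib {Z : Type*} [AddCommGroup Z] [DecidableEq Z] (A : Finset Z) :
    ∑ t ∈ A - A, rfib A t = A.card ^ 2 := by
  rw [sq, ← Finset.card_product]
  rw [Finset.card_eq_sum_card_fiberwise (f := fun p => p.1 - p.2) (t := A - A)]
  · rfl
  · intro p hp
    rw [Finset.mem_coe, Finset.mem_product] at hp
    exact Finset.mem_coe.mpr (Finset.sub_mem_sub hp.1 hp.2)

lemma sum_rfib_sq {Z : Type*} [AddCommGroup Z] [DecidableEq Z] (A : Finset Z) :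
    ∑ t ∈ A - A, (rfib A t) ^ 2 =
    ((A ×ˢ A ×ˢ A ×ˢ A).filter
      (fun x => x.1 - x.2.1 = x.2.2.1 - x.2.2.2)).card := by
  rw [Finset.card_eq_sum_card_fiberwise (f := fun x => x.1 - x.2.1) (t := A - A)]
  · apply Finset.sum_congr rfl
    intro t _
    simp only [sq, rfib]
    rw [← Finset.card_product]
    apply Finset.card_nbij' (fun p => (p.1.1, p.1.2, p.2.1, p.2.2))
      (fun x => ((x.1, x.2.1), (x.2.2.1, x.2.2.2)))
    · intro p hp
      simp only [Finset.mem_coe, Finset.mem_product, Finset.mem_filter] at hp ⊢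
      obtain ⟨⟨⟨h1, h2⟩, h3⟩, ⟨h4, h5⟩, h6⟩ := hp
      exact ⟨⟨⟨h1, h2, h4, h5⟩, h3.trans h6.symm⟩, h3⟩
    · intro x hx
      simp only [Finset.mem_coe, Finset.mem_product, Finset.mem_filter] at hx ⊢
      obtain ⟨⟨⟨h1, h2, h4, h5⟩, h3⟩, h6⟩ := hx
      exact ⟨⟨⟨h1, h2⟩, h6⟩, ⟨h4, h5⟩, h6 ▸ h3.symm⟩
    · intro p _; rfl
    · intro x _; rfl
  · intro x hx
    simp only [Finset.mem_coe, Finset.mem_filter, Finset.mem_product] at hx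
    exact Finset.sub_mem_sub hx.1.1 hx.1.2.1

/-- If `|A − A| = K|A|` with `K ≥ 1`, `0 ≤ ε ≤ 1` and `E(A) ≤ K^{−(1−ε)}`, then
`|{t ∈ A − A : |A[t]| ≥ |A|/(2K)}| ≥ (1/4)·K^{1−ε}·|A|`. -/
theorem statement9 {Z : Type*} [AddCommGroup Z] [DecidableEq Z]
    (A : Finset Z) (hA : A.Nonempty) (K : ℝ) (hK : 1 ≤ K)
    (hKdef : ((A - A).card : ℝ) = K * (A.card : ℝ))
    (ε : ℝ) (hε0 : 0 ≤ ε) (hε1 : ε ≤ 1)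
    (hE : energy A ≤ K ^ (-(1 - ε))) :
    (1/4 : ℝ) * K ^ (1 - ε) * (A.card : ℝ) ≤
      (((A - A).filter
        (fun t => (A.card : ℝ) / (2 * K) ≤ ((shiftInter A t).card : ℝ))).card : ℝ) := by
  have hApos : (0 : ℝ) < A.card := by exact_mod_cast Finset.card_pos.mpr hA
  have hKpos : (0 : ℝ) < K := lt_of_lt_of_le one_pos hK
  set S := (A - A).filter
      (fun t => (A.card : ℝ) / (2 * K) ≤ ((shiftInter A t).card : ℝ)) with hS
  -- sum over complement is small
  have hcompl : ∑ t ∈ (A - A) \ S, ((rfib A t : ℝ)) ≤ (A.card : ℝ) ^ 2 / 2 := by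
    calc ∑ t ∈ (A - A) \ S, ((rfib A t : ℝ))
        ≤ ∑ t ∈ (A - A) \ S, (A.card : ℝ) / (2 * K) := by
          apply Finset.sum_le_sum
          intro t ht
          simp only [hS, Finset.mem_sdiff, Finset.mem_filter, not_and, not_le] at ht
          rw [← shiftInter_card]
          exact le_of_lt (ht.2 ht.1)
      _ = ((A - A) \ S).card * ((A.card : ℝ) / (2 * K)) := by
          rw [Finset.sum_const, nsmul_eq_mul]
      _ ≤ ((A - A).card : ℝ) * ((A.card : ℝ) / (2 * K)) := by
          apply mul_le_mul_of_nonneg_right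
          · exact_mod_cast Finset.card_le_card (Finset.sdiff_subset)
          · positivity
      _ = (A.card : ℝ) ^ 2 / 2 := by
          rw [hKdef]; field_simp
  have hSsub : S ⊆ A - A := Finset.filter_subset _ _
  have hsum : ∑ t ∈ A - A, ((rfib A t : ℝ)) = (A.card : ℝ) ^ 2 := by
    rw [← Nat.cast_sum, sum_rfib A]; push_cast; ring
  have hsplit := Finset.sum_sdiff hSsub (f := fun t => (rfib A t : ℝ))
  have hSbig : (A.card : ℝ) ^ 2 / 2 ≤ ∑ t ∈ S, ((rfib A t : ℝ)) := by linarith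
  -- Cauchy-Schwarz
  have hCS : (∑ t ∈ S, ((rfib A t : ℝ))) ^ 2 ≤ (S.card : ℝ) * ∑ t ∈ S, ((rfib A t : ℝ)) ^ 2 :=
    sq_sum_le_card_mul_sum_sq
  have hsq : ∑ t ∈ S, ((rfib A t : ℝ)) ^ 2 ≤ K ^ (-(1 - ε)) * (A.card : ℝ) ^ 3 := by
    have h1 : ∑ t ∈ S, ((rfib A t : ℝ)) ^ 2 ≤ ∑ t ∈ A - A, ((rfib A t : ℝ)) ^ 2 :=
      Finset.sum_le_sum_of_subset_of_nonneg hSsub (fun _ _ _ => by positivity)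
    have h2 : ∑ t ∈ A - A, ((rfib A t : ℝ)) ^ 2 = energy A * (A.card : ℝ) ^ 3 := by
      have ha : (A.card : ℝ) ≠ 0 := ne_of_gt hApos
      rw [energy, ← sum_rfib_sq A]
      push_cast
      field_simp
    rw [h2] at h1
    calc ∑ t ∈ S, ((rfib A t : ℝ)) ^ 2 ≤ energy A * (A.card : ℝ) ^ 3 := h1
      _ ≤ K ^ (-(1 - ε)) * (A.card : ℝ) ^ 3 := by
          apply mul_le_mul_of_nonneg_right hE (by positivity)
  have hrpow : (0 : ℝ) < K ^ (-(1 - ε)) := Real.rpow_pos_of_pos hKpos _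
  have key : ((A.card : ℝ) ^ 2 / 2) ^ 2 ≤ (S.card : ℝ) * (K ^ (-(1 - ε)) * (A.card : ℝ) ^ 3) := by
    calc ((A.card : ℝ) ^ 2 / 2) ^ 2 ≤ (∑ t ∈ S, ((rfib A t : ℝ))) ^ 2 := by
          apply pow_le_pow_left₀ (by positivity) hSbig
      _ ≤ (S.card : ℝ) * ∑ t ∈ S, ((rfib A t : ℝ)) ^ 2 := hCS
      _ ≤ (S.card : ℝ) * (K ^ (-(1 - ε)) * (A.card : ℝ) ^ 3) := by
          apply mul_le_mul_of_nonneg_left hsq (by positivity)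
  have hinv : K ^ (1 - ε) * K ^ (-(1 - ε)) = 1 := by
    rw [← Real.rpow_add hKpos]; simp
  have hPpos : (0 : ℝ) < K ^ (1 - ε) := Real.rpow_pos_of_pos hKpos _
  have h : K ^ (1 - ε) * (((A.card : ℝ) ^ 2 / 2) ^ 2) ≤ (S.card : ℝ) * (A.card : ℝ) ^ 3 := by
    calc K ^ (1 - ε) * (((A.card : ℝ) ^ 2 / 2) ^ 2)
        ≤ K ^ (1 - ε) * ((S.card : ℝ) * (K ^ (-(1 - ε)) * (A.card : ℝ) ^ 3)) :=
          mul_le_mul_of_nonneg_left key (le_of_lt hPpos)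
      _ = (K ^ (1 - ε) * K ^ (-(1 - ε))) * ((S.card : ℝ) * (A.card : ℝ) ^ 3) := by ring
      _ = (S.card : ℝ) * (A.card : ℝ) ^ 3 := by rw [hinv, one_mul]
  nlinarith [h, pow_pos hApos 3, mul_pos hPpos hApos]
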